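/- Let a,b,c,d ∈ ℂ satisfy the nondegeneracy condition (a²d²-b²c²)(b²d²-c²a²)(c²d²-a²b²) ≠ 0 and define A, B, C, D as in Hudson's formulas. Then all sixteen points [c,d,a,b], [a,-b,-c,d], [-b,a,d,-c], [c,d,-a,-b], [-b,-a,d,c], [-c,d,a,-b], [d,-c,-b,a], [-a,-b,c,d], [d,c,-b,-a], [b,a,d,c], [-c,d,-a,b], [b,-a,d,-c], [d,-c,b,-a], [-a,b,-c,d], [d,c,b,a], together with [a,b,c,d], lie on the Hudson quartic x⁴+y⁴+z⁴+w⁴ + 2Dxyzw + A(x²w²+y²z²) + B(y²w²+x²z²) + C(x²y²+z²w²) = 0. -/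

import Mathlib

set_option maxHeartbeats 4000000


/-- Hudson's quartic equation with coefficients `A`, `B`, `C`, `D`. -/
def HudsonQuartic (A B C D x y z w : ℂ) : Prop :=
  x^4 + y^4 + z^4 + w^4 + 2*D*x*y*z*w + A*(x^2*w^2 + y^2*z^2)
    + B*(y^2*w^2 + x^2*z^2) + C*(x^2*y^2 + z^2*w^2) = 0

theorem sixteen_nodes_on_hudson_quartic (a b c d : ℂ)
    (h : (a^2*d^2 - b^2*c^2) * (b^2*d^2 - c^2*a^2) * (c^2*d^2 - a^2*b^2) ≠ 0) :
    let A := (b^4+c^4-a^4-d^4)/(a^2*d^2-b^2*c^2)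
    let B := (c^4+a^4-b^4-d^4)/(b^2*d^2-c^2*a^2)
    let C := (a^4+b^4-c^4-d^4)/(c^2*d^2-a^2*b^2)
    let D := a*b*c*d*(d^2+a^2-b^2-c^2)*(d^2+b^2-c^2-a^2)*(d^2+c^2-a^2-b^2)*(a^2+b^2+c^2+d^2)
      / ((a^2*d^2-b^2*c^2)*(b^2*d^2-c^2*a^2)*(c^2*d^2-a^2*b^2))
    HudsonQuartic A B C D a b c d ∧
    HudsonQuartic A B C D c d a b ∧
    HudsonQuartic A B C D a (-b) (-c) d ∧
    HudsonQuartic A B C D (-b) a d (-c) ∧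
    HudsonQuartic A B C D c d (-a) (-b) ∧
    HudsonQuartic A B C D (-b) (-a) d c ∧
    HudsonQuartic A B C D (-c) d a (-b) ∧
    HudsonQuartic A B C D d (-c) (-b) a ∧
    HudsonQuartic A B C D (-a) (-b) c d ∧
    HudsonQuartic A B C D d c (-b) (-a) ∧
    HudsonQuartic A B C D b a d c ∧
    HudsonQuartic A B C D (-c) d (-a) b ∧
    HudsonQuartic A B C D b (-a) d (-c) ∧
    HudsonQuartic A B C D d (-c) b (-a) ∧
    HudsonQuartic A B C D (-a) b (-c) d ∧
    HudsonQuartic A B C D d c b a := by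

  intro A B C D
  have h1 : a^2*d^2 - b^2*c^2 ≠ 0 := fun e => h (by rw [e]; ring)
  have h2 : b^2*d^2 - c^2*a^2 ≠ 0 := fun e => h (by rw [e]; ring)
  have h3 : c^2*d^2 - a^2*b^2 ≠ 0 := fun e => h (by rw [e]; ring)
  have key : a^4+b^4+c^4+d^4 + 2*D*(a*b*c*d) + A*(a^2*d^2+b^2*c^2)
      + B*(b^2*d^2+a^2*c^2) + C*(a^2*b^2+c^2*d^2) = 0 := by
    have eA : A*(a^2*d^2-b^2*c^2) = b^4+c^4-a^4-d^4 := div_mul_cancel₀ _ h1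
    have eB : B*(b^2*d^2-c^2*a^2) = c^4+a^4-b^4-d^4 := div_mul_cancel₀ _ h2
    have eC : C*(c^2*d^2-a^2*b^2) = a^4+b^4-c^4-d^4 := div_mul_cancel₀ _ h3
    have eD : D*((a^2*d^2-b^2*c^2)*(b^2*d^2-c^2*a^2)*(c^2*d^2-a^2*b^2)) = a*b*c*d*(d^2+a^2-b^2-c^2)*(d^2+b^2-c^2-a^2)*(d^2+c^2-a^2-b^2)*(a^2+b^2+c^2+d^2) := div_mul_cancel₀ _ h
    apply mul_left_cancel₀ h
    linear_combination 2*(a*b*c*d)*eD + (a^2*d^2+b^2*c^2)*(b^2*d^2-c^2*a^2)*(c^2*d^2-a^2*b^2)*eA + (b^2*d^2+a^2*c^2)*(a^2*d^2-b^2*c^2)*(c^2*d^2-a^2*b^2)*eB + (a^2*b^2+c^2*d^2)*(a^2*d^2-b^2*c^2)*(b^2*d^2-c^2*a^2)*eC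
  refine ⟨?_, ?_, ?_, ?_, ?_, ?_, ?_, ?_, ?_, ?_, ?_, ?_, ?_, ?_, ?_, ?_⟩ <;>
    · simp only [HudsonQuartic]
      linear_combination key
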